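/- If A and B are n×n positive semidefinite complex matrices, then n·(det A · det B)^(1/n) ≤ tr(AB). -/

import Mathlib

open scoped ComplexOrder

lemma trace_eq_sum_eig {m : ℕ} {C : Matrix (Fin m) (Fin m) ℂ} (hC : C.IsHermitian) :
    C.trace = ∑ i, (hC.eigenvalues i : ℂ) := by
  conv_lhs => rw [hC.spectral_theorem, Unitary.conjStarAlgAut_apply]
  rw [Matrix.trace_mul_cycle]
  simp [Matrix.trace_diagonal, Unitary.coe_star_mul_self]

lemma amgm_trace {m : ℕ} {C : Matrix (Fin m) (Fin m) ℂ} (hC : C.PosSemidef) :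
    (m : ℝ) * (C.det.re ^ ((1 : ℝ) / m)) ≤ C.trace.re := by
  rcases Nat.eq_zero_or_pos m with hm | hm
  · subst hm; simp [Matrix.trace]
  have hdet : C.det.re = ∏ i, hC.isHermitian.eigenvalues i := by
    rw [hC.isHermitian.det_eq_prod_eigenvalues]; norm_cast
  have htr : C.trace.re = ∑ i, hC.isHermitian.eigenvalues i := by
    rw [trace_eq_sum_eig hC.isHermitian]; norm_cast
  rw [hdet, htr]
  have hnn : ∀ i ∈ Finset.univ, (0:ℝ) ≤ hC.isHermitian.eigenvalues i :=
    fun i _ => hC.eigenvalues_nonneg i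
  have key := Real.geom_mean_le_arith_mean_weighted Finset.univ
    (fun _ => (1:ℝ)/m) hC.isHermitian.eigenvalues
    (fun i _ => by positivity)
    (by simp [Finset.card_univ]; field_simp)
    hnn
  calc (m : ℝ) * (∏ i, hC.isHermitian.eigenvalues i) ^ ((1:ℝ)/m)
      = (m : ℝ) * ∏ i, hC.isHermitian.eigenvalues i ^ ((1:ℝ)/m) := by
        rw [← Real.finset_prod_rpow _ _ hnn]
    _ ≤ (m : ℝ) * ∑ i, (1:ℝ)/m * hC.isHermitian.eigenvalues i :=
        mul_le_mul_of_nonneg_left key (by positivity)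
    _ = ∑ i, hC.isHermitian.eigenvalues i := by
        rw [Finset.mul_sum]
        field_simp

open scoped MatrixOrder in
noncomputable def psdSqrt {n : ℕ} (A : Matrix (Fin n) (Fin n) ℂ) : Matrix (Fin n) (Fin n) ℂ :=
  CFC.sqrt A

open scoped MatrixOrder in
lemma psdSqrt_posSemidef {n : ℕ} (A : Matrix (Fin n) (Fin n) ℂ) : (psdSqrt A).PosSemidef :=
  Matrix.nonneg_iff_posSemidef.mp (CFC.sqrt_nonneg A)

open scoped MatrixOrder in
lemma psdSqrt_mul_self {n : ℕ} {A : Matrix (Fin n) (Fin n) ℂ} (hA : A.PosSemidef) :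
    psdSqrt A * psdSqrt A = A :=
  CFC.sqrt_mul_sqrt_self A hA.nonneg

theorem det_det_rpow_le_trace_mul {n : ℕ} (A B : Matrix (Fin n) (Fin n) ℂ)
    (hA : A.PosSemidef) (hB : B.PosSemidef) :
    (n : ℝ) * ((A.det.re * B.det.re) ^ ((1 : ℝ) / n)) ≤ ((A * B).trace).re := by
  set S := psdSqrt A with hS
  have hC : (S * B * S).PosSemidef := by
    have := hB.conjTranspose_mul_mul_same S
    rwa [(psdSqrt_posSemidef A).isHermitian.eq] at this
  have htr : (A * B).trace = (S * B * S).trace := by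
    conv_lhs => rw [← psdSqrt_mul_self hA]
    conv_rhs => rw [Matrix.trace_mul_cycle]
  have hSre : S.det = (S.det.re : ℂ) := by
    rw [(psdSqrt_posSemidef A).isHermitian.det_eq_prod_eigenvalues]; norm_cast
  have hBre : B.det = (B.det.re : ℂ) := by
    rw [hB.isHermitian.det_eq_prod_eigenvalues]; norm_cast
  have hdet : (S * B * S).det.re = A.det.re * B.det.re := by
    have h1 : S.det * S.det = A.det := by rw [← Matrix.det_mul, psdSqrt_mul_self hA]
    have hAre : A.det.re = S.det.re * S.det.re := by
      have h2 := congrArg Complex.re h1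
      rw [hSre, ← Complex.ofReal_mul, Complex.ofReal_re] at h2
      linarith
    have h3 : (S * B * S).det = ((S.det.re * B.det.re * S.det.re : ℝ) : ℂ) := by
      rw [Matrix.det_mul, Matrix.det_mul]
      conv_lhs => rw [hSre, hBre]
      push_cast; ring
    rw [h3, Complex.ofReal_re, hAre]; ring
  rw [htr, ← hdet]
  exact amgm_trace hC
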